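/- Let H, K be Hilbert spaces, Γ ⊆ L(H,K) a concrete C*-module with [ΓH] = K, 𝔅 := [Γ*Γ], ℭ := [ΓΓ*], and A ⊆ L(H) a nondegenerate C*-algebra with [A𝔅] ⊆ A. If (u_i) is a bounded approximate unit of the C*-algebra ℭ and T ∈ Ind_Γ(A), then for every γ ∈ Γ the nets (u_i T u_i γ) and (u_i* T* u_i* γ) converge in norm to Tγ and T*γ, respectively. -/

import Mathlib

noncomputable section
open ContinuousLinearMap Filter

/-- Closed linear span of a subset of a complex normed space. -/
def clspan {E : Type*} [NormedAddCommGroup E] [NormedSpace ℂ E] (S : Set E) : Set E :=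
  ((Submodule.span ℂ S).topologicalClosure : Set E)

lemma subset_clspan {E : Type*} [NormedAddCommGroup E] [NormedSpace ℂ E] (S : Set E) :
    S ⊆ clspan S :=
  fun _ hx => subset_closure (Submodule.subset_span hx)

lemma key {H K : Type*} [NormedAddCommGroup H] [InnerProductSpace ℂ H]
    [NormedAddCommGroup K] [InnerProductSpace ℂ K]
    {ι : Type*} [Nonempty ι] [SemilatticeSup ι]
    (v : ι → (K →L[ℂ] K)) (C : ℝ) (hC : ∀ i, ‖v i‖ ≤ C)
    (S : Set (H →L[ℂ] K))
    (hS : ∀ s ∈ S, Tendsto (fun i => v i ∘L s) atTop (nhds s)) :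
    ∀ x ∈ clspan S, Tendsto (fun i => v i ∘L x) atTop (nhds x) := by
  have hC0 : 0 ≤ C := le_trans (norm_nonneg _) (hC (Classical.arbitrary ι))
  have hspan : ∀ x ∈ Submodule.span ℂ S, Tendsto (fun i => v i ∘L x) atTop (nhds x) := by
    intro x hx
    induction hx using Submodule.span_induction with
    | mem x hx => exact hS x hx
    | zero => simp only [comp_zero]; exact tendsto_const_nhds
    | add x y _ _ hx hy => simp only [comp_add]; exact hx.add hy
    | smul c x _ hx => simp only [comp_smulₛₗ, RingHom.id_apply]; exact hx.const_smul c
  intro x hx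
  rw [Metric.tendsto_atTop]
  intro ε hε
  have hδ : (0:ℝ) < ε / (2 * (C + 2)) := by positivity
  have hx' : x ∈ closure ((Submodule.span ℂ S : Submodule ℂ _) : Set (H →L[ℂ] K)) := hx
  obtain ⟨y, hy, hxy⟩ := Metric.mem_closure_iff.mp hx' _ hδ
  have h2 := hspan y hy
  rw [Metric.tendsto_atTop] at h2
  obtain ⟨N, hN⟩ := h2 (ε / 2) (by positivity)
  refine ⟨N, fun i hi => ?_⟩
  have h3 : dist (v i ∘L x) x ≤ ‖v i ∘L (x - y)‖ + dist (v i ∘L y) y + ‖y - x‖ := by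
    rw [dist_eq_norm, dist_eq_norm]
    have he : v i ∘L x - x = v i ∘L (x - y) + (v i ∘L y - y) + (y - x) := by
      simp only [comp_sub]; abel
    rw [he]
    exact norm_add₃_le
  have h4 : ‖v i ∘L (x - y)‖ ≤ C * ‖x - y‖ :=
    le_trans (opNorm_comp_le _ _) (by gcongr; exact hC i)
  have h5 : ‖x - y‖ < ε / (2 * (C + 2)) := by rwa [← dist_eq_norm]
  have h6 : ‖y - x‖ < ε / (2 * (C + 2)) := by rwa [norm_sub_rev]
  have h7 := hN i hi
  have hA : C * ‖x - y‖ ≤ C * (ε / (2 * (C + 2))) :=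
    mul_le_mul_of_nonneg_left h5.le hC0
  have key2 : C * (ε / (2 * (C + 2))) + 2 * (ε / (2 * (C + 2))) = ε / 2 := by
    field_simp
  linarith

open ContinuousLinearMap Filter

/-- Under the hypotheses, a bounded net `v` acting as a left approximate unit on `ℭ`
gives `(v i ∘ T' ∘ v i) ∘ γ → T' ∘ γ` whenever `T'γ ∈ [ΓA]`. -/
lemma main_aux {H K : Type*} [NormedAddCommGroup H] [InnerProductSpace ℂ H] [CompleteSpace H]
    [NormedAddCommGroup K] [InnerProductSpace ℂ K] [CompleteSpace K]
    (Γ : Set (H →L[ℂ] K))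
    (hΓ : clspan (Set.image2 (fun (S : K →L[ℂ] K) (T : H →L[ℂ] K) => S ∘L T)
        (Set.image2 (fun (S T : H →L[ℂ] K) => S ∘L adjoint T) Γ Γ) Γ) = Γ)
    (ℭ : Set (K →L[ℂ] K))
    (hℭ : ℭ = clspan (Set.image2 (fun (S T : H →L[ℂ] K) => S ∘L adjoint T) Γ Γ))
    (A : Set (H →L[ℂ] H))
    {ι : Type*} [Nonempty ι] [SemilatticeSup ι]
    (v : ι → (K →L[ℂ] K)) (C : ℝ) (hC : ∀ i, ‖v i‖ ≤ C)
    (hv : ∀ c ∈ ℭ, Tendsto (fun i => v i ∘L c) atTop (nhds c))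
    (T' : K →L[ℂ] K)
    (hT' : ∀ γ ∈ Γ, T' ∘L γ ∈
        clspan (Set.image2 (fun (γ' : H →L[ℂ] K) (a : H →L[ℂ] H) => γ' ∘L a) Γ A)) :
    ∀ γ ∈ Γ, Tendsto (fun i => (v i ∘L T' ∘L v i) ∘L γ) atTop (nhds (T' ∘L γ)) := by
  -- Step 1: v i ∘ γ → γ for γ ∈ Γ
  have step1 : ∀ γ ∈ Γ, Tendsto (fun i => v i ∘L γ) atTop (nhds γ) := by
    intro γ hγ
    rw [← hΓ] at hγ
    refine key v C hC _ ?_ γ hγ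
    rintro s ⟨c, hc, γ₃, hγ₃, rfl⟩
    have hcℭ : c ∈ ℭ := by rw [hℭ]; exact subset_clspan _ hc
    have hcont := (((compL ℂ H K K).flip γ₃).continuous.tendsto c).comp (hv c hcℭ)
    simp only [Function.comp_def, flip_apply, compL_apply] at hcont
    simpa only [comp_assoc] using hcont
  -- Step 2: v i ∘ x → x for x ∈ [ΓA]
  have step2 : ∀ x ∈ clspan (Set.image2 (fun (γ' : H →L[ℂ] K) (a : H →L[ℂ] H) => γ' ∘L a) Γ A),
      Tendsto (fun i => v i ∘L x) atTop (nhds x) := by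
    refine key v C hC _ ?_
    rintro s ⟨γ', hγ', a, _, rfl⟩
    have hcont := (((compL ℂ H H K).flip a).continuous.tendsto γ').comp (step1 γ' hγ')
    simp only [Function.comp_def, flip_apply, compL_apply] at hcont
    simpa only [comp_assoc] using hcont
  intro γ hγ
  have h1 := step1 γ hγ
  have h2 := step2 _ (hT' γ hγ)
  have hdecomp : ∀ i, (v i ∘L T' ∘L v i) ∘L γ
      = v i ∘L (T' ∘L (v i ∘L γ - γ)) + v i ∘L (T' ∘L γ) := by
    intro i
    simp only [comp_sub, sub_add_cancel, comp_assoc]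
  have hzero : Tendsto (fun i => v i ∘L (T' ∘L (v i ∘L γ - γ))) atTop (nhds 0) := by
    refine squeeze_zero_norm (f := fun i => v i ∘L (T' ∘L (v i ∘L γ - γ))) (a := fun i => C * ‖T'‖ * ‖v i ∘L γ - γ‖) (fun i => ?_) ?_
    · calc ‖v i ∘L (T' ∘L (v i ∘L γ - γ))‖ ≤ ‖v i‖ * ‖T' ∘L (v i ∘L γ - γ)‖ :=
            opNorm_comp_le _ _
        _ ≤ ‖v i‖ * (‖T'‖ * ‖v i ∘L γ - γ‖) := by gcongr; exact opNorm_comp_le _ _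
        _ ≤ C * (‖T'‖ * ‖v i ∘L γ - γ‖) := by apply mul_le_mul_of_nonneg_right (hC i) (by positivity)
        _ = C * ‖T'‖ * ‖v i ∘L γ - γ‖ := by ring
    · have := ((h1.sub (tendsto_const_nhds (x := γ))).norm).const_mul (C * ‖T'‖)
      simpa using this
  have := hzero.add h2
  rw [zero_add] at this
  exact this.congr (fun i => (hdecomp i).symm)

/-- With `Γ ⊆ L(H,K)` a concrete C*-module with `[ΓH]=K`, `𝔅 = [Γ*Γ]`,
`ℭ = [ΓΓ*]`, and `A ⊆ L(H)` a nondegenerate C*-algebra with `[A𝔅] ⊆ A`: if `(u_i)` is a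
bounded approximate unit of `ℭ` and `T ∈ Ind_Γ(A)`, then for every `γ ∈ Γ` the nets
`u_i T u_i γ` and `u_i* T* u_i* γ` converge in norm to `Tγ` and `T*γ`. -/
theorem stmt12
    {H K : Type*} [NormedAddCommGroup H] [InnerProductSpace ℂ H] [CompleteSpace H]
    [NormedAddCommGroup K] [InnerProductSpace ℂ K] [CompleteSpace K]
    (Γ : Set (H →L[ℂ] K))
    (hΓclosed : clspan Γ = Γ)
    (hΓ : clspan (Set.image2 (fun (S : K →L[ℂ] K) (T : H →L[ℂ] K) => S ∘L T)
        (Set.image2 (fun (S T : H →L[ℂ] K) => S ∘L adjoint T) Γ Γ) Γ) = Γ)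
    (hΓH : (Submodule.span ℂ {x : K | ∃ γ ∈ Γ, ∃ ζ : H, γ ζ = x}).topologicalClosure = ⊤)
    (ℭ : Set (K →L[ℂ] K))
    (hℭ : ℭ = clspan (Set.image2 (fun (S T : H →L[ℂ] K) => S ∘L adjoint T) Γ Γ))
    (A : Set (H →L[ℂ] H))
    (hAclosed : clspan A = A) (hAmul : ∀ a ∈ A, ∀ a' ∈ A, a ∘L a' ∈ A)
    (hAstar : ∀ a ∈ A, adjoint a ∈ A)
    (hAnd : (Submodule.span ℂ {x : H | ∃ a ∈ A, ∃ ζ : H, a ζ = x}).topologicalClosure = ⊤)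
    (hA𝔅 : clspan (Set.image2 (fun (a b : H →L[ℂ] H) => a ∘L b) A
        (clspan (Set.image2 (fun (S T : H →L[ℂ] K) => adjoint S ∘L T) Γ Γ))) ⊆ A)
    -- a bounded approximate unit `(u_i)` of `ℭ`:
    {ι : Type*} [Nonempty ι] [SemilatticeSup ι]
    (u : ι → (K →L[ℂ] K))
    (humem : ∀ i, u i ∈ ℭ)
    (hubdd : ∃ C : ℝ, ∀ i, ‖u i‖ ≤ C)
    (huleft : ∀ c ∈ ℭ, Tendsto (fun i => u i ∘L c) atTop (nhds c))
    (huright : ∀ c ∈ ℭ, Tendsto (fun i => c ∘L u i) atTop (nhds c))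
    -- `T ∈ Ind_Γ(A)`:
    (T : K →L[ℂ] K)
    (hT : ∀ γ ∈ Γ, T ∘L γ ∈
        clspan (Set.image2 (fun (γ' : H →L[ℂ] K) (a : H →L[ℂ] H) => γ' ∘L a) Γ A))
    (hTadj : ∀ γ ∈ Γ, adjoint T ∘L γ ∈
        clspan (Set.image2 (fun (γ' : H →L[ℂ] K) (a : H →L[ℂ] H) => γ' ∘L a) Γ A)) :
    ∀ γ ∈ Γ,
      Tendsto (fun i => (u i ∘L T ∘L u i) ∘L γ) atTop (nhds (T ∘L γ)) ∧
      Tendsto (fun i => (adjoint (u i) ∘L adjoint T ∘L adjoint (u i)) ∘L γ) atTop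
        (nhds (adjoint T ∘L γ)) := by
  obtain ⟨C, hC⟩ := hubdd
  -- ℭ is star-closed
  have hsp : Set.MapsTo (star : (K →L[ℂ] K) → (K →L[ℂ] K))
      ((Submodule.span ℂ (Set.image2 (fun (S T : H →L[ℂ] K) => S ∘L adjoint T) Γ Γ) :
        Submodule ℂ _) : Set _)
      ((Submodule.span ℂ (Set.image2 (fun (S T : H →L[ℂ] K) => S ∘L adjoint T) Γ Γ) :
        Submodule ℂ _) : Set _) := by
    intro x hx
    induction hx using Submodule.span_induction with
    | mem x hx =>
      rcases hx with ⟨a, ha, b, hb, rfl⟩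
      refine Submodule.subset_span ?_
      rw [star_eq_adjoint, adjoint_comp, adjoint_adjoint]
      exact ⟨b, hb, a, ha, rfl⟩
    | zero => simpa using (Submodule.span ℂ _).zero_mem
    | add x y _ _ hx hy => simpa [star_add] using add_mem hx hy
    | smul c x _ hx =>
      simpa [star_smul] using Submodule.smul_mem _ (starRingEnd ℂ c) hx
  have hstar : ∀ c ∈ ℭ, adjoint c ∈ ℭ := by
    intro c hc
    rw [hℭ] at hc ⊢
    rw [← star_eq_adjoint]
    exact map_mem_closure continuous_star hc hsp
  -- the adjoint net is also a left approximate unit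
  have hv : ∀ c ∈ ℭ, Tendsto (fun i => adjoint (u i) ∘L c) atTop (nhds c) := by
    intro c hc
    have h := huright (adjoint c) (hstar c hc)
    have h2 := (continuous_star.tendsto (adjoint c)).comp h
    simp only [Function.comp_def] at h2
    have heq : ∀ i, star (adjoint c ∘L u i) = adjoint (u i) ∘L c := by
      intro i; rw [star_eq_adjoint, adjoint_comp, adjoint_adjoint]
    rw [star_eq_adjoint, adjoint_adjoint] at h2
    exact h2.congr heq
  have hCadj : ∀ i, ‖adjoint (u i)‖ ≤ C := by
    intro i
    rw [← star_eq_adjoint, norm_star]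
    exact hC i
  intro γ hγ
  exact ⟨main_aux Γ hΓ ℭ hℭ A u C hC huleft T hT γ hγ,
    main_aux Γ hΓ ℭ hℭ A (fun i => adjoint (u i)) C hCadj hv (adjoint T) hTadj γ hγ⟩
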